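/- Let α > 0 and let f₁, f₂ be C⁴ solutions on [y₀, ∞) of f(y) = Σ_{j=0}^4 α_i^j (y-y₀)^j/j! + (quintuple integral of |f|^{α-1}f from y₀), corresponding to λ = -1. If f₁⁽ʲ⁾(y₀) ≥ f₂⁽ʲ⁾(y₀) for j = 0,...,4, with strict inequality for at least one j, then f₁(y) > f₂(y) for every y > y₀. -/

import Mathlib

open Set intervalIntegral

noncomputable def Fpow (α : ℝ) : ℝ → ℝ := fun s => |s| ^ (α - 1) * s

noncomputable def prim (y₀ : ℝ) (u : ℝ → ℝ) : ℝ → ℝ := fun y => ∫ r in y₀..y, u r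

noncomputable def chain (α y₀ : ℝ) (f : ℝ → ℝ) : ℕ → ℝ → ℝ
  | 0 => fun r => Fpow α (f r)
  | n + 1 => prim y₀ (chain α y₀ f n)

lemma Fpow_zero (α : ℝ) : Fpow α 0 = 0 := by simp [Fpow]

lemma Fpow_neg (α s : ℝ) : Fpow α (-s) = -Fpow α s := by
  simp [Fpow, abs_neg, mul_neg]

lemma Fpow_of_nonneg {α : ℝ} (hα : 0 < α) {s : ℝ} (hs : 0 ≤ s) :
    Fpow α s = s ^ α := by
  rcases eq_or_lt_of_le hs with h | h
  · simp [Fpow, ← h, Real.zero_rpow hα.ne']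
  · rw [Fpow, abs_of_pos h, ← Real.rpow_add_one h.ne' (α - 1)]
    norm_num

lemma Fpow_of_nonpos {α : ℝ} (hα : 0 < α) {s : ℝ} (hs : s ≤ 0) :
    Fpow α s = -((-s) ^ α) := by
  have h := Fpow_of_nonneg hα (neg_nonneg.2 hs)
  rw [← h]
  have := Fpow_neg α s
  linarith

lemma Fpow_mono {α : ℝ} (hα : 0 < α) : Monotone (Fpow α) := by
  intro s t hst
  rcases le_or_gt 0 s with hs | hs
  · rw [Fpow_of_nonneg hα hs, Fpow_of_nonneg hα (hs.trans hst)]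
    exact Real.rpow_le_rpow hs hst hα.le
  · rcases le_or_gt 0 t with ht | ht
    · have h1 : Fpow α s ≤ 0 := by
        rw [Fpow_of_nonpos hα hs.le]
        have := Real.rpow_nonneg (by linarith : (0:ℝ) ≤ -s) α
        linarith
      have h2 : 0 ≤ Fpow α t := by
        rw [Fpow_of_nonneg hα ht]
        exact Real.rpow_nonneg ht α
      linarith
    · rw [Fpow_of_nonpos hα hs.le, Fpow_of_nonpos hα ht.le]
      have : (-t) ^ α ≤ (-s) ^ α :=
        Real.rpow_le_rpow (by linarith) (by linarith) hα.le
      linarith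

lemma Fpow_abs_eq {α : ℝ} (hα : 0 < α) (s : ℝ) : |Fpow α s| = |s| ^ α := by
  rcases eq_or_ne s 0 with rfl | hs
  · simp [Fpow, Real.zero_rpow hα.ne']
  · have h1 : (0:ℝ) < |s| := abs_pos.2 hs
    rw [Fpow, abs_mul, abs_of_nonneg (Real.rpow_nonneg (abs_nonneg s) _),
      ← Real.rpow_add_one h1.ne' (α - 1)]
    norm_num

lemma Fpow_continuous {α : ℝ} (hα : 0 < α) : Continuous (Fpow α) := by
  rw [continuous_iff_continuousAt]
  intro x
  rcases eq_or_ne x 0 with rfl | hx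
  · have h0 : Filter.Tendsto (fun s : ℝ => |s| ^ α) (nhds 0) (nhds 0) := by
      have hc : ContinuousAt (fun s : ℝ => |s| ^ α) 0 :=
        (Real.continuousAt_rpow_const _ _ (Or.inr hα.le)).comp continuous_abs.continuousAt
      simpa [Real.zero_rpow hα.ne'] using hc.tendsto
    have : Filter.Tendsto (Fpow α) (nhds 0) (nhds 0) :=
      squeeze_zero_norm (fun s => by
        rw [Real.norm_eq_abs, Fpow_abs_eq hα]) h0
    simpa [ContinuousAt, Fpow_zero] using this
  · exact ((Real.continuousAt_rpow_const _ _
      (Or.inl (abs_ne_zero.2 hx))).comp continuous_abs.continuousAt).mul continuousAt_id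

lemma contOn_prim {y₀ : ℝ} {u : ℝ → ℝ} (hu : ContinuousOn u (Ici y₀)) :
    ContinuousOn (prim y₀ u) (Ici y₀) := by
  intro x hx
  have hx' : y₀ ≤ x := hx
  have hsub : Icc y₀ (x + 1) ⊆ Ici y₀ := Icc_subset_Ici_self
  have hInt : MeasureTheory.IntegrableOn u (uIcc y₀ (x + 1)) :=
    ((hu.mono (by rw [uIcc_of_le (by linarith)]; exact hsub))).integrableOn_compact isCompact_uIcc
  have h1 : ContinuousOn (prim y₀ u) (Icc y₀ (x + 1)) := by
    have := intervalIntegral.continuousOn_primitive_interval (μ := MeasureTheory.volume) hInt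
    rwa [uIcc_of_le (by linarith : y₀ ≤ x + 1)] at this
  have hmem : Icc y₀ (x + 1) ∈ nhdsWithin x (Ici y₀) := by
    rw [← Ici_inter_Iic]
    exact Filter.inter_mem self_mem_nhdsWithin
      (mem_nhdsWithin_of_mem_nhds (Iic_mem_nhds (lt_add_one x)))
  exact (h1 x ⟨hx', by linarith⟩).mono_of_mem_nhdsWithin hmem

lemma prim_abs_le {y₀ b C : ℝ} {n : ℕ} {u : ℝ → ℝ} (hb : y₀ ≤ b)
    (hu : ContinuousOn u (Ici y₀)) (hC : 0 ≤ C)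
    (hbd : ∀ r ∈ Icc y₀ b, |u r| ≤ C * (r - y₀) ^ n) :
    ∀ y ∈ Icc y₀ b, |prim y₀ u y| ≤ C * (y - y₀) ^ (n + 1) := by
  intro y hy
  have hyy : y₀ ≤ y := hy.1
  have huI : IntervalIntegrable u MeasureTheory.volume y₀ y :=
    (hu.mono (by rw [uIcc_of_le hyy]; exact Icc_subset_Ici_self)).intervalIntegrable
  have h1 : |∫ r in y₀..y, u r| ≤ ∫ r in y₀..y, |u r| :=
    intervalIntegral.abs_integral_le_integral_abs hyy
  have h2 : (∫ r in y₀..y, |u r|) ≤ ∫ r in y₀..y, C * (r - y₀) ^ n := by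
    apply intervalIntegral.integral_mono_on hyy huI.abs
    · exact (Continuous.intervalIntegrable (by continuity) _ _)
    · intro r hr
      exact hbd r ⟨hr.1, hr.2.trans hy.2⟩
  have h3 : (∫ r in y₀..y, C * (r - y₀) ^ n) = C * ((y - y₀) ^ (n + 1) / (n + 1)) := by
    rw [intervalIntegral.integral_const_mul]
    rw [intervalIntegral.integral_comp_sub_right (fun x => x ^ n) y₀]
    rw [integral_pow]
    simp
  have h4 : C * ((y - y₀) ^ (n + 1) / (n + 1)) ≤ C * (y - y₀) ^ (n + 1) := by
    apply mul_le_mul_of_nonneg_left _ hC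
    have hpow : (0:ℝ) ≤ (y - y₀) ^ (n + 1) := pow_nonneg (by linarith) _
    have hn1 : (1:ℝ) ≤ (n + 1 : ℝ) := by
      have : (0:ℝ) ≤ (n:ℝ) := Nat.cast_nonneg n
      linarith
    exact div_le_self hpow hn1
  calc |prim y₀ u y| = |∫ r in y₀..y, u r| := rfl
    _ ≤ ∫ r in y₀..y, |u r| := h1
    _ ≤ ∫ r in y₀..y, C * (r - y₀) ^ n := h2
    _ = C * ((y - y₀) ^ (n + 1) / (n + 1)) := h3
    _ ≤ C * (y - y₀) ^ (n + 1) := h4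

/-- Comparison principle for weak `C⁴` solutions of `f⁽⁵⁾ = |f|^{α-1}f`
(`λ = -1`): if two solutions of the quintuple-integral equation with data
`a₁, a₂` at `y₀` satisfy `a₁ j ≥ a₂ j` for `j = 0,…,4`, with strict
inequality for at least one `j`, then `f₁ > f₂` on `(y₀, ∞)`. -/
theorem stmt12 (α y₀ : ℝ) (f₁ f₂ : ℝ → ℝ) (a₁ a₂ : Fin 5 → ℝ)
    (hα : 0 < α)
    (hc₁ : ContinuousOn f₁ (Ici y₀)) (hc₂ : ContinuousOn f₂ (Ici y₀))
    (hint₁ : ∀ y : ℝ, y₀ ≤ y →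
      f₁ y = (∑ j : Fin 5, a₁ j * (y - y₀) ^ (j : ℕ) / (Nat.factorial j)) +
        ∫ s₄ in y₀..y, ∫ s₃ in y₀..s₄, ∫ s₂ in y₀..s₃, ∫ s₁ in y₀..s₂,
          ∫ r in y₀..s₁, |f₁ r| ^ (α - 1) * f₁ r)
    (hint₂ : ∀ y : ℝ, y₀ ≤ y →
      f₂ y = (∑ j : Fin 5, a₂ j * (y - y₀) ^ (j : ℕ) / (Nat.factorial j)) +
        ∫ s₄ in y₀..y, ∫ s₃ in y₀..s₄, ∫ s₂ in y₀..s₃, ∫ s₁ in y₀..s₂,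
          ∫ r in y₀..s₁, |f₂ r| ^ (α - 1) * f₂ r)
    (hord : ∀ j : Fin 5, a₂ j ≤ a₁ j) (hstrict : ∃ j : Fin 5, a₂ j < a₁ j) :
    ∀ y : ℝ, y₀ < y → f₂ y < f₁ y := by
  classical
  set d : ℕ → ℝ → ℝ := fun n x => chain α y₀ f₁ n x - chain α y₀ f₂ n x with hd_def
  -- continuity of the chains
  have hch : ∀ f : ℝ → ℝ, ContinuousOn f (Ici y₀) →
      ∀ n, ContinuousOn (chain α y₀ f n) (Ici y₀) := by
    intro f hf n
    induction n with
    | zero => exact (Fpow_continuous hα).comp_continuousOn hf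
    | succ n ih => exact contOn_prim ih
  have hchint : ∀ f : ℝ → ℝ, ContinuousOn f (Ici y₀) → ∀ n, ∀ y, y₀ ≤ y →
      IntervalIntegrable (chain α y₀ f n) MeasureTheory.volume y₀ y := by
    intro f hf n y hy
    exact ((hch f hf n).mono (by rw [uIcc_of_le hy]; exact Icc_subset_Ici_self)).intervalIntegrable
  have hdcont : ∀ n, ContinuousOn (d n) (Ici y₀) := fun n =>
    (hch f₁ hc₁ n).sub (hch f₂ hc₂ n)
  have hdprim : ∀ n, ∀ y, y₀ ≤ y → prim y₀ (d n) y = d (n + 1) y := by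
    intro n y hy
    show (∫ r in y₀..y, (chain α y₀ f₁ n r - chain α y₀ f₂ n r)) = _
    rw [intervalIntegral.integral_sub (hchint f₁ hc₁ n y hy) (hchint f₂ hc₂ n y hy)]
    rfl
  clear_value d
  have echain : ∀ f : ℝ → ℝ, ∀ y : ℝ,
      (∫ s₄ in y₀..y, ∫ s₃ in y₀..s₄, ∫ s₂ in y₀..s₃, ∫ s₁ in y₀..s₂,
          ∫ r in y₀..s₁, |f r| ^ (α - 1) * f r) = chain α y₀ f 5 y := by
    intro f y
    rfl
  -- the basic identity  f₁ - f₂ = P + d 5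
  have hg : ∀ y, y₀ ≤ y → f₁ y - f₂ y =
      (∑ j : Fin 5, (a₁ j - a₂ j) * (y - y₀) ^ (j : ℕ) / (Nat.factorial j)) + d 5 y := by
    intro y hy
    have hsum : (∑ j : Fin 5, a₁ j * (y - y₀) ^ (j : ℕ) / (Nat.factorial j)) -
        (∑ j : Fin 5, a₂ j * (y - y₀) ^ (j : ℕ) / (Nat.factorial j)) =
        ∑ j : Fin 5, (a₁ j - a₂ j) * (y - y₀) ^ (j : ℕ) / (Nat.factorial j) := by
      rw [← Finset.sum_sub_distrib]
      exact Finset.sum_congr rfl fun j _ => by ring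
    rw [hint₁ y hy, hint₂ y hy, echain f₁ y, echain f₂ y, hd_def]
    simp only
    linarith [hsum]
  have hch5zero : ∀ f : ℝ → ℝ, chain α y₀ f 5 y₀ = 0 := fun f =>
    intervalIntegral.integral_same
  have h0 : f₁ y₀ - f₂ y₀ = a₁ 0 - a₂ 0 := by
    have hgy := hg y₀ le_rfl
    have hd5 : d 5 y₀ = 0 := by
      rw [hd_def]; simp only [hch5zero, sub_zero]
    rw [hd5] at hgy
    rw [hgy]
    simp [Fin.sum_univ_five, sub_self, show ((3:Fin 5):ℕ) = 3 from rfl,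
      show ((4:Fin 5):ℕ) = 4 from rfl]
  -- bound M for d 0 on [y₀, y₀+1]
  obtain ⟨C, hC⟩ := (isCompact_Icc (a := y₀) (b := y₀ + 1)).exists_bound_of_continuousOn
    ((hdcont 0).mono Icc_subset_Ici_self)
  set M := max C 0 with hM_def
  have hM0 : (0 : ℝ) ≤ M := le_max_right _ _
  have hMC : C ≤ M := le_max_left _ _
  have hMb : ∀ r ∈ Icc y₀ (y₀ + 1), |d 0 r| ≤ M * (r - y₀) ^ 0 := by
    intro r hr
    have h' : ‖d 0 r‖ ≤ M := (hC r hr).trans hMC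
    rw [Real.norm_eq_abs] at h'
    simpa using h'
  have hbd : ∀ n, ∀ y ∈ Icc y₀ (y₀ + 1), |d n y| ≤ M * (y - y₀) ^ n := by
    intro n
    induction n with
    | zero => exact hMb
    | succ n ih =>
      intro y hy
      rw [← hdprim n y hy.1]
      exact prim_abs_le (by linarith) (hdcont n) hM0 ih y hy
  obtain ⟨k, hk⟩ := hstrict
  set c := a₁ k - a₂ k with hc_def
  have hc : 0 < c := sub_pos.2 hk
  set δ := min 1 (c / (24 * (M + 1))) with hδ_def
  have hδ : 0 < δ := lt_min one_pos (div_pos hc (by linarith))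
  have hδ1 : δ ≤ 1 := min_le_left _ _
  have hδle : δ ≤ c / (24 * (M + 1)) := min_le_right _ _
  clear_value δ
  clear_value c
  clear_value M
  have hfacpos : (0 : ℝ) < (Nat.factorial (k : ℕ) : ℝ) := by
    exact_mod_cast Nat.factorial_pos _
  have hfac24 : ((Nat.factorial (k : ℕ) : ℝ)) ≤ 24 := by
    have hk4 : (k : ℕ) ≤ 4 := Nat.lt_succ_iff.mp k.isLt
    have := Nat.factorial_le hk4
    norm_num [Nat.factorial] at this
    exact_mod_cast this
  have hP : ∀ y, y₀ ≤ y → c * (y - y₀) ^ (k : ℕ) / (Nat.factorial (k : ℕ)) ≤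
      ∑ j : Fin 5, (a₁ j - a₂ j) * (y - y₀) ^ (j : ℕ) / (Nat.factorial (j : ℕ)) := by
    intro y hy
    rw [hc_def]
    exact Finset.single_le_sum
      (f := fun j : Fin 5 => (a₁ j - a₂ j) * (y - y₀) ^ (j : ℕ) / (Nat.factorial (j : ℕ)))
      (fun j _ => div_nonneg (mul_nonneg (sub_nonneg.2 (hord j))
        (pow_nonneg (by linarith) _)) (Nat.cast_nonneg _)) (Finset.mem_univ k)
  -- Step 1 : positivity near y₀
  have step1 : ∀ y, y₀ < y → y ≤ y₀ + δ → f₂ y < f₁ y := by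
    intro y hy1 hy2
    have ht : 0 < y - y₀ := by linarith
    have htδ : y - y₀ ≤ δ := by linarith
    have ht1 : y - y₀ ≤ 1 := le_trans htδ hδ1
    have hyIcc : y ∈ Icc y₀ (y₀ + 1) := ⟨hy1.le, by linarith⟩
    have habs := hbd 5 y hyIcc
    have hgd := hg y hy1.le
    have hPy := hP y hy1.le
    have htk : 0 < (y - y₀) ^ (k : ℕ) := pow_pos ht _
    have h51 : (y - y₀) ^ 5 ≤ (y - y₀) ^ ((k : ℕ) + 1) :=
      pow_le_pow_of_le_one ht.le ht1 k.isLt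
    have h1 : δ * (24 * (M + 1)) ≤ c := (le_div_iff₀ (by linarith)).1 hδle
    have hMδ : M * δ * 24 < c := by nlinarith
    have hkey : M * (y - y₀) ^ 5 < c * (y - y₀) ^ (k : ℕ) / (Nat.factorial (k : ℕ)) := by
      have e1 : M * (y - y₀) ^ 5 ≤ M * ((y - y₀) ^ (k : ℕ) * (y - y₀)) := by
        rw [← pow_succ]; exact mul_le_mul_of_nonneg_left h51 hM0
      have e2 : M * ((y - y₀) ^ (k : ℕ) * (y - y₀)) ≤ M * ((y - y₀) ^ (k : ℕ) * δ) :=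
        mul_le_mul_of_nonneg_left
          (mul_le_mul_of_nonneg_left htδ (pow_nonneg ht.le _)) hM0
      have h4 : M * δ < c / (Nat.factorial (k : ℕ)) := by
        rw [lt_div_iff₀ hfacpos]
        calc M * δ * (Nat.factorial (k : ℕ) : ℝ) ≤ M * δ * 24 :=
              mul_le_mul_of_nonneg_left hfac24 (mul_nonneg hM0 hδ.le)
          _ < c := hMδ
      have e3 : M * ((y - y₀) ^ (k : ℕ) * δ) < (c / (Nat.factorial (k : ℕ))) * (y - y₀) ^ (k : ℕ) := by
        calc M * ((y - y₀) ^ (k : ℕ) * δ) = (M * δ) * (y - y₀) ^ (k : ℕ) := by ring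
          _ < (c / (Nat.factorial (k : ℕ))) * (y - y₀) ^ (k : ℕ) :=
              mul_lt_mul_of_pos_right h4 htk
      have e4 : (c / (Nat.factorial (k : ℕ))) * (y - y₀) ^ (k : ℕ) =
          c * (y - y₀) ^ (k : ℕ) / (Nat.factorial (k : ℕ)) := by ring
      linarith
    have hd5low := (abs_le.mp habs).1
    nlinarith [hgd, hPy, hkey, hd5low]
  -- main contradiction argument
  by_contra hcon
  push_neg at hcon
  obtain ⟨z, hz1, hz2⟩ := hcon
  set B := {y : ℝ | y₀ + δ ≤ y ∧ f₁ y ≤ f₂ y} with hB_def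
  have hzB : z ∈ B := by
    refine ⟨?_, hz2⟩
    by_contra h
    push_neg at h
    exact absurd hz2 (not_le.2 (step1 z hz1 (by linarith)))
  have hBclosed : IsClosed B := by
    have hBeq : B = Ici (y₀ + δ) ∩ (fun y => f₁ y - f₂ y) ⁻¹' Iic 0 := by
      ext x
      simp [hB_def, sub_nonpos]
    rw [hBeq]
    exact ContinuousOn.preimage_isClosed_of_isClosed
      ((hc₁.sub hc₂).mono (Ici_subset_Ici.2 (by linarith))) isClosed_Ici isClosed_Iic
  have hBbdd : BddBelow B := ⟨y₀ + δ, fun y hy => hy.1⟩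
  set m := sInf B with hm_def
  have hmB : m ∈ B := hBclosed.csInf_mem ⟨z, hzB⟩ hBbdd
  have hm1 : y₀ + δ ≤ m := hmB.1
  have hm0 : y₀ < m := by linarith
  have hord' : ∀ x ∈ Ico y₀ m, f₂ x ≤ f₁ x := by
    intro x hx
    rcases eq_or_lt_of_le hx.1 with heq | hx1
    · have := hord 0
      rw [← heq]
      linarith [h0]
    · by_contra hcon2
      push_neg at hcon2
      rcases le_or_gt x (y₀ + δ) with h | h
      · exact absurd (step1 x hx1 h) (not_lt.2 hcon2.le)
      · have hxB : x ∈ B := ⟨h.le, hcon2.le⟩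
        have := csInf_le hBbdd hxB
        rw [← hm_def] at this
        linarith [hx.2]
  have hd1 : ∀ y ∈ Icc y₀ m, 0 ≤ d 1 y := by
    intro y hy
    rw [← hdprim 0 y hy.1]
    apply intervalIntegral.integral_nonneg_of_ae_restrict hy.1
    refine (MeasureTheory.ae_restrict_iff' measurableSet_Icc).2 ?_
    have hsubm : {x | ¬ (x ∈ Icc y₀ y → 0 ≤ d 0 x)} ⊆ {m} := by
      intro x hx
      simp only [mem_setOf_eq, Classical.not_imp] at hx
      obtain ⟨hx2, hx1⟩ := hx
      by_contra hxm
      apply hx1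
      have hxIco : x ∈ Ico y₀ m := ⟨hx2.1, lt_of_le_of_ne (hx2.2.trans hy.2) hxm⟩
      have hle := hord' x hxIco
      have hFm : Fpow α (f₂ x) ≤ Fpow α (f₁ x) := Fpow_mono hα hle
      have hdx : d 0 x = Fpow α (f₁ x) - Fpow α (f₂ x) := by
        rw [hd_def]; simp [chain]
      rw [hdx]
      linarith
    exact MeasureTheory.ae_iff.2
      (MeasureTheory.measure_mono_null hsubm (MeasureTheory.measure_singleton m))
  have hcas : ∀ n, (∀ y ∈ Icc y₀ m, 0 ≤ d (n + 1) y) → ∀ y ∈ Icc y₀ m, 0 ≤ d (n + 2) y := by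
    intro n hn y hy
    rw [← hdprim (n + 1) y hy.1]
    exact intervalIntegral.integral_nonneg hy.1 (fun u hu => hn u ⟨hu.1, hu.2.trans hy.2⟩)
  have h5' : 0 ≤ d 5 m :=
    (hcas 3 (hcas 2 (hcas 1 (hcas 0 hd1)))) m ⟨hm0.le, le_rfl⟩
  have hgm := hg m hm0.le
  have hPm := hP m hm0.le
  have hppos : 0 < c * (m - y₀) ^ (k : ℕ) / (Nat.factorial (k : ℕ)) :=
    div_pos (mul_pos hc (pow_pos (by linarith) _)) hfacpos
  have : f₂ m < f₁ m := by nlinarith [hgm, hPm, hppos, h5']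
  linarith [hmB.2]
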